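/- For integers 0 ≤ d1 ≤ d2 with g = d1 + d2 + 1 ≥ 1, define C(d1,d2) = (2^(2g)/(2g)!)·Σ_{h=0}^{d1} (g-2h)·F_h·F_{g-h} with F_h = ((2h-1)!!)^3/(2^(3h)·h!). Then C(d1,d2) ≤ 1/π. -/

import Mathlib

open Nat Finset

/-- `F h = ((2h-1)!!)^3 / (2^(3h) h!)`. -/
noncomputable def Fbgw (h : ℕ) : ℝ := ((2 * h - 1)‼ : ℝ) ^ 3 / (2 ^ (3 * h) * (h ! : ℝ))

open Filter Topology

noncomputable def aseq (n : ℕ) : ℝ := (Nat.centralBinom n : ℝ)^2 * (4*n+1) / 16^n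

lemma cb_fact (n : ℕ) : (Nat.centralBinom n : ℝ) * ((n ! : ℕ) : ℝ)^2 = ((2*n)! : ℝ) := by
  have h := Nat.choose_mul_factorial_mul_factorial (Nat.le_mul_of_pos_left n (by norm_num : 0 < 2))
  have h2 : 2*n - n = n := by omega
  rw [h2] at h
  have : Nat.centralBinom n * n ! * n ! = (2*n)! := h
  exact_mod_cast by push_cast [← this]; ring

lemma sixteen_pow (n : ℕ) : (16:ℝ)^n = 2^(4*n) := by
  rw [pow_mul]; norm_num

lemma aseq_eq (n : ℕ) : aseq n = (4*n+1)/(2*n+1) * (Real.Wallis.W n)⁻¹ := by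
  have hW := Real.Wallis.W_eq_factorial_ratio n
  have hC := cb_fact n
  have hNf : ((n ! : ℕ) : ℝ) ≠ 0 := Nat.cast_ne_zero.mpr n.factorial_ne_zero
  have hN2 : (((2*n)! : ℕ) : ℝ) ≠ 0 := Nat.cast_ne_zero.mpr (2*n).factorial_ne_zero
  have h1 : (0:ℝ) < 2*(n:ℝ)+1 := by positivity
  rw [aseq, hW, ← sixteen_pow]
  rw [← hC]
  field_simp

lemma aseq_mono : Monotone aseq := by
  apply monotone_nat_of_le_succ
  intro n
  set c := (Nat.centralBinom n : ℝ) with hc_def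
  set c' := (Nat.centralBinom (n+1) : ℝ) with hc'_def
  have key : ((n:ℝ)+1) * c' = 2*(2*n+1) * c := by
    have h := Nat.succ_mul_centralBinom_succ n
    have h2 : (((n+1) * (n+1).centralBinom : ℕ) : ℝ) = ((2 * (2*n+1) * n.centralBinom : ℕ) : ℝ) := by
      rw [h]
    push_cast at h2
    linarith [h2]
  have key2 : (((n:ℝ)+1) * c')^2 = (2*(2*(n:ℝ)+1) * c)^2 := by rw [key]
  rw [aseq, aseq, div_le_div_iff₀ (by positivity) (by positivity)]
  have h16 : (16:ℝ)^(n+1) = 16^n * 16 := pow_succ 16 n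
  have main : c'^2*(4*((n:ℝ)+1)+1)*(((n:ℝ)+1)^2)
      = c^2*(4*(n:ℝ)+1)*16*(((n:ℝ)+1)^2) + 4*c^2 := by
    linear_combination (4*(n:ℝ)+5) * key2
  have step : c^2*(4*(n:ℝ)+1)*16 ≤ c'^2*(4*((n:ℝ)+1)+1) := by
    have hp : (0:ℝ) < ((n:ℝ)+1)^2 := by positivity
    rw [← mul_le_mul_iff_of_pos_right hp]
    nlinarith [main, sq_nonneg c]
  have h16n : (0:ℝ) < (16:ℝ)^n := by positivity
  calc c^2*(4*(n:ℝ)+1)*16^(n+1) = (c^2*(4*(n:ℝ)+1)*16)*16^n := by rw [pow_succ]; ring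
    _ ≤ (c'^2*(4*((n:ℝ)+1)+1))*16^n := mul_le_mul_of_nonneg_right step h16n.le
    _ = c'^2*(4*((n+1:ℕ):ℝ)+1)*16^n := by push_cast; ring

lemma aseq_tendsto : Tendsto aseq atTop (𝓝 (4/Real.pi)) := by
  have h1 : Tendsto (fun n : ℕ => ((4*n+1):ℝ)/(2*n+1)) atTop (𝓝 2) := by
    have heq : ∀ n : ℕ, ((4*(n:ℝ)+1))/(2*n+1) = 2 - 1/(2*(n:ℝ)+1) := by
      intro n
      have hne : (2*(n:ℝ)+1) ≠ 0 := by positivity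
      rw [eq_sub_iff_add_eq, ← add_div, div_eq_iff hne]
      ring
    have hfun : (fun n : ℕ => ((4*n+1):ℝ)/(2*n+1)) = fun n : ℕ => 2 - 1/(2*(n:ℝ)+1) :=
      funext heq
    rw [hfun]
    have hA : Tendsto (fun n : ℕ => (2:ℝ)*n+1) atTop atTop := by
      have hcast : Tendsto (fun n : ℕ => ((n:ℝ))) atTop atTop := tendsto_natCast_atTop_atTop
      have h2 : Tendsto (fun n : ℕ => (2:ℝ)*n) atTop atTop :=
        hcast.const_mul_atTop (by norm_num : (0:ℝ) < 2)
      exact h2.atTop_add tendsto_const_nhds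
    have h0 : Tendsto (fun n : ℕ => 1/((2:ℝ)*n+1)) atTop (𝓝 0) :=
      tendsto_const_nhds.div_atTop hA
    simpa using h0.const_sub 2
  have h2 : Tendsto (fun n => (Real.Wallis.W n)⁻¹) atTop (𝓝 (Real.pi/2)⁻¹) :=
    Real.Wallis.tendsto_W_nhds_pi_div_two.inv₀ (by positivity)
  have h3 := h1.mul h2
  have hpi : (2:ℝ) * (Real.pi/2)⁻¹ = 4/Real.pi := by
    rw [inv_div]; ring
  rw [hpi] at h3
  have : aseq = fun n : ℕ => ((4*n+1):ℝ)/(2*n+1) * (Real.Wallis.W n)⁻¹ := funext aseq_eq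
  rw [this]
  exact h3

lemma aseq_le (n : ℕ) : aseq n ≤ 4 / Real.pi :=
  aseq_mono.ge_of_tendsto aseq_tendsto n

lemma central_binom_sq_bound (n : ℕ) :
    Real.pi * ((2*n)! : ℝ)^2 * (4*n+1) ≤ 4 * 16^n * ((n ! : ℕ) : ℝ)^4 := by
  have h := aseq_le n
  have hC := cb_fact n
  have hpi : (0:ℝ) < Real.pi := Real.pi_pos
  have h16n : (0:ℝ) < (16:ℝ)^n := by positivity
  rw [aseq, div_le_div_iff₀ h16n hpi] at h
  calc Real.pi * ((2*n)! : ℝ)^2 * (4*n+1) = (Nat.centralBinom n : ℝ)^2 * (4*n+1) * Real.pi * ((n ! : ℕ) : ℝ)^4 := by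
        rw [← hC]; ring
    _ ≤ 4 * 16^n * ((n ! : ℕ) : ℝ)^4 := by
        have hf : (0:ℝ) ≤ ((n ! : ℕ) : ℝ)^4 := by positivity
        nlinarith [mul_le_mul_of_nonneg_right h hf]



lemma two_mul_factorial_eq (h : ℕ) : (2*h)! = 2^h * h ! * (2*h-1)‼ := by
  cases h with
  | zero => rfl
  | succ k =>
    have h1 : 2*(k+1) = (2*k+1)+1 := by ring
    have h2 : 2*(k+1)-1 = 2*k+1 := by omega
    rw [h1, Nat.factorial_eq_mul_doubleFactorial]
    have h2' : 2*k+1+1-1 = 2*k+1 := by omega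
    rw [h2']
    have h3 : 2*k+1+1 = 2*(k+1) := by ring
    rw [h3, Nat.doubleFactorial_two_mul]

lemma Fbgw_eq (h : ℕ) : Fbgw h = ((2*h)! : ℝ)^3 / (2^(6*h) * ((h !  : ℕ) : ℝ)^4) := by
  have key : (((2*h)! : ℕ) : ℝ) = 2^h * ((h ! : ℕ) : ℝ) * ((2*h-1)‼ : ℝ) := by
    exact_mod_cast congrArg (Nat.cast : ℕ → ℝ) (two_mul_factorial_eq h)
  rw [Fbgw, key]
  have hf : ((h ! : ℕ) : ℝ) ≠ 0 := Nat.cast_ne_zero.mpr h.factorial_ne_zero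
  have h6 : (2:ℝ)^(6*h) = (2^h)^3 * 2^(3*h) := by
    rw [← pow_mul, ← pow_add]; ring_nf
  rw [h6]
  field_simp

lemma Fbgw_pos (h : ℕ) : 0 < Fbgw h := by
  rw [Fbgw_eq]
  have h1 : (0:ℝ) < ((2*h)! : ℕ) := by exact_mod_cast (2*h).factorial_pos
  have h2 : (0:ℝ) < ((h ! : ℕ) : ℝ) := by exact_mod_cast h.factorial_pos
  positivity

lemma Fbgw_zero : Fbgw 0 = 1 := by
  rw [Fbgw_eq]; norm_num

lemma Fbgw_one : Fbgw 1 = 1/8 := by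
  rw [Fbgw_eq]; norm_num [Nat.factorial]

lemma Fbgw_succ (h : ℕ) : Fbgw (h+1) = Fbgw h * ((2*(h:ℝ)+1)^3 / (8*((h:ℝ)+1))) := by
  rw [Fbgw_eq, Fbgw_eq]
  have e1 : (((2*(h+1))! : ℕ) : ℝ) = (2*(h:ℝ)+2)*(2*(h:ℝ)+1)*(((2*h)! : ℕ) : ℝ) := by
    have : 2*(h+1) = (2*h+1)+1 := by ring
    rw [this, Nat.factorial_succ, Nat.factorial_succ]
    push_cast; ring
  have e2 : (((h+1)! : ℕ) : ℝ) = ((h:ℝ)+1)*((h ! : ℕ) : ℝ) := by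
    rw [Nat.factorial_succ]; push_cast; ring
  have e3 : (2:ℝ)^(6*(h+1)) = 64 * 2^(6*h) := by
    rw [show 6*(h+1) = 6*h + 6 by ring, pow_add]; norm_num; ring
  rw [e1, e2, e3]
  have hf : ((h ! : ℕ) : ℝ) ≠ 0 := Nat.cast_ne_zero.mpr h.factorial_ne_zero
  have hh : ((h:ℝ)+1) ≠ 0 := by positivity
  have h2p : ((2:ℝ))^(6*h) ≠ 0 := by positivity
  field_simp
  ring

lemma ratio_mono {a b : ℕ} (hab : a ≤ b) :
    (2*(a:ℝ)+1)^3/(8*((a:ℝ)+1)) ≤ (2*(b:ℝ)+1)^3/(8*((b:ℝ)+1)) := by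
  have ha : (0:ℝ) ≤ a := Nat.cast_nonneg a
  have hb : (a:ℝ) ≤ b := Nat.cast_le.mpr hab
  rw [div_le_div_iff₀ (by positivity) (by positivity)]
  nlinarith [mul_nonneg ha (sub_nonneg.mpr hb), mul_nonneg (mul_nonneg ha ha) (sub_nonneg.mpr hb),
    mul_nonneg (mul_nonneg ha (ha.trans hb)) (sub_nonneg.mpr hb), sub_nonneg.mpr hb,
    mul_nonneg (sub_nonneg.mpr hb) (sub_nonneg.mpr hb)]

lemma pair_step {g h : ℕ} (h1 : 2*h+2 ≤ g) :
    Fbgw (h+1) * Fbgw (g-(h+1)) ≤ Fbgw h * Fbgw (g-h) := by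
  have hm : g - h = (g - (h+1)) + 1 := by omega
  set m := g - (h+1) with hmdef
  rw [hm, Fbgw_succ, Fbgw_succ]
  have hmono := ratio_mono (show h ≤ m by omega)
  have hF1 := Fbgw_pos h
  have hF2 := Fbgw_pos m
  calc Fbgw h * ((2*(h:ℝ)+1)^3/(8*((h:ℝ)+1))) * Fbgw m
      = (Fbgw h * Fbgw m) * ((2*(h:ℝ)+1)^3/(8*((h:ℝ)+1))) := by ring
    _ ≤ (Fbgw h * Fbgw m) * ((2*(m:ℝ)+1)^3/(8*((m:ℝ)+1))) :=
        mul_le_mul_of_nonneg_left hmono (by positivity)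
    _ = Fbgw h * (Fbgw m * ((2*(m:ℝ)+1)^3/(8*((m:ℝ)+1)))) := by ring

lemma pair_le {g : ℕ} : ∀ h, 1 ≤ h → 2*h ≤ g →
    Fbgw h * Fbgw (g-h) ≤ Fbgw 1 * Fbgw (g-1) := by
  intro h
  induction h with
  | zero => intro h1 _; omega
  | succ k ih =>
    intro _ h2
    cases Nat.eq_zero_or_pos k with
    | inl hk => subst hk; exact le_refl _
    | inr hk =>
      calc Fbgw (k+1) * Fbgw (g-(k+1)) ≤ Fbgw k * Fbgw (g-k) := pair_step (by omega)
        _ ≤ Fbgw 1 * Fbgw (g-1) := ih hk (by omega)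

lemma term1_bound (g : ℕ) :
    (2:ℝ)^(2*g) / (((2*g)! : ℕ) : ℝ) * ((g:ℝ) * Fbgw g)
      ≤ 4*(g:ℝ)/((4*(g:ℝ)+1)*Real.pi) := by
  have hb := central_binom_sq_bound g
  rw [Fbgw_eq]
  set A := (((2*g)! : ℕ) : ℝ) with hA
  set B := ((g ! : ℕ) : ℝ) with hB
  have hApos : (0:ℝ) < A := by rw [hA]; exact_mod_cast (2*g).factorial_pos
  have hBpos : (0:ℝ) < B := by rw [hB]; exact_mod_cast g.factorial_pos
  have hpi := Real.pi_pos
  have h2 : (2:ℝ)^(6*g) = 2^(2*g) * 2^(4*g) := by rw [← pow_add]; ring_nf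
  have lhs_eq : (2:ℝ)^(2*g)/A * ((g:ℝ) * (A^3/(2^(6*g)*B^4))) = (g:ℝ)*A^2/(2^(4*g)*B^4) := by
    rw [h2]; field_simp
  rw [lhs_eq, ← sixteen_pow, div_le_div_iff₀ (by positivity) (by positivity)]
  have hg0 : (0:ℝ) ≤ (g:ℝ) := Nat.cast_nonneg g
  nlinarith [mul_le_mul_of_nonneg_left hb hg0]

lemma term2_bound (e : ℕ) (c : ℝ) (hc : 0 ≤ c) :
    (2:ℝ)^(2*(e+1)) / (((2*(e+1))! : ℕ) : ℝ) * (c * (Fbgw 1 * Fbgw e))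
      ≤ c/((4*(e:ℝ)+1)*((e:ℝ)+1)*(2*(e:ℝ)+1)*Real.pi) := by
  have hb := central_binom_sq_bound e
  rw [Fbgw_one, Fbgw_eq]
  have efac : (((2*(e+1))! : ℕ) : ℝ) = (2*(e:ℝ)+2)*(2*(e:ℝ)+1)*(((2*e)! : ℕ):ℝ) := by
    rw [show 2*(e+1) = (2*e+1)+1 by ring, Nat.factorial_succ, Nat.factorial_succ]
    push_cast; ring
  rw [efac]
  set A := (((2*e)! : ℕ) : ℝ) with hA
  set B := ((e ! : ℕ) : ℝ) with hB
  have hApos : (0:ℝ) < A := by rw [hA]; exact_mod_cast (2*e).factorial_pos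
  have hBpos : (0:ℝ) < B := by rw [hB]; exact_mod_cast e.factorial_pos
  have hpi := Real.pi_pos
  have he0 : (0:ℝ) ≤ (e:ℝ) := Nat.cast_nonneg e
  have h2 : (2:ℝ)^(2*(e+1)) = 4 * 2^(2*e) := by
    rw [show 2*(e+1) = 2*e+2 by ring, pow_add]; norm_num [mul_comm]
  have h26 : (2:ℝ)^(6*e) = 2^(2*e)*2^(4*e) := by rw [← pow_add]; ring_nf
  have lhs_eq : (2:ℝ)^(2*(e+1)) / ((2*(e:ℝ)+2)*(2*(e:ℝ)+1)*A) * (c * (1/8 * (A^3/(2^(6*e)*B^4))))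
      = c*A^2/(4*((e:ℝ)+1)*(2*(e:ℝ)+1)*(2^(4*e)*B^4)) := by
    rw [h2, h26]; field_simp; ring
  rw [lhs_eq, ← sixteen_pow, div_le_div_iff₀ (by positivity) (by positivity)]
  have hcc : (0:ℝ) ≤ c*((e:ℝ)+1)*(2*(e:ℝ)+1) := by positivity
  nlinarith [mul_le_mul_of_nonneg_left hb hcc]

lemma final_ineq (d1 e : ℕ) (hd : 2*d1 ≤ e) :
    (d1:ℝ)*(((e:ℝ)+1)-2)/((4*(e:ℝ)+1)*((e:ℝ)+1)*(2*(e:ℝ)+1)*Real.pi)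
      + 4*((e:ℝ)+1)/((4*((e:ℝ)+1)+1)*Real.pi) ≤ 1/Real.pi := by
  have hx : (0:ℝ) ≤ (e:ℝ) := Nat.cast_nonneg e
  have ht : (0:ℝ) ≤ (d1:ℝ) := Nat.cast_nonneg d1
  have htx : 2*(d1:ℝ) ≤ (e:ℝ) := by exact_mod_cast hd
  set x := (e:ℝ)
  set t := (d1:ℝ)
  have hpi := Real.pi_pos
  have hQ : (0:ℝ) < (4*x+1)*(x+1)*(2*x+1) := by positivity
  have hR : (0:ℝ) < 4*(x+1)+1 := by positivity
  have hrat : t*((x+1)-2)/((4*x+1)*(x+1)*(2*x+1)) + 4*(x+1)/(4*(x+1)+1) ≤ 1 := by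
    rw [div_add_div _ _ (ne_of_gt hQ) (ne_of_gt hR), div_le_one (by positivity)]
    nlinarith [mul_nonneg ht (by linarith : (0:ℝ) ≤ 4*x+5),
      mul_nonneg (mul_nonneg (by linarith : (0:ℝ) ≤ x - 2*t) hx) (by linarith : (0:ℝ) ≤ 4*x+5),
      pow_nonneg hx 3, sq_nonneg x, mul_nonneg hx hx, mul_nonneg (mul_nonneg hx hx) hx]
  have split1 : t*((x+1)-2)/((4*x+1)*(x+1)*(2*x+1)*Real.pi)
      = (t*((x+1)-2)/((4*x+1)*(x+1)*(2*x+1))) * (1/Real.pi) := by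
    rw [mul_one_div, _root_.div_div]
  have split2 : 4*(x+1)/((4*(x+1)+1)*Real.pi) = (4*(x+1)/(4*(x+1)+1)) * (1/Real.pi) := by
    rw [mul_one_div, _root_.div_div]
  rw [split1, split2, ← add_mul]
  calc (t*((x+1)-2)/((4*x+1)*(x+1)*(2*x+1)) + 4*(x+1)/(4*(x+1)+1)) * (1/Real.pi)
      ≤ 1 * (1/Real.pi) := mul_le_mul_of_nonneg_right hrat (by positivity)
    _ = 1/Real.pi := one_mul _


/-- The normalized two-point BGW numbers are bounded above by `1/π`. -/
theorem bgw_two_point_upper_bound (d1 d2 : ℕ) (h : d1 ≤ d2) :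
    (2 : ℝ) ^ (2 * (d1 + d2 + 1)) / ((2 * (d1 + d2 + 1))! : ℝ)
        * ∑ h ∈ Finset.range (d1 + 1),
            (((d1 + d2 + 1 : ℕ) : ℝ) - 2 * h) * Fbgw h * Fbgw (d1 + d2 + 1 - h)
      ≤ 1 / Real.pi := by
  set e := d1 + d2 with he
  have hcc : ((e+1:ℕ):ℝ) = (e:ℝ)+1 := by push_cast; ring
  simp only [hcc]
  set c := (d1:ℝ)*(((e:ℝ)+1)-2) with hc_def
  have hc : 0 ≤ c := by
    rcases Nat.eq_zero_or_pos d1 with h0 | h1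
    · simp [hc_def, h0]
    · have h2e : (2:ℝ) ≤ (e:ℝ) := by
        have : 2 ≤ e := by omega
        exact_mod_cast this
      have : (0:ℝ) ≤ (d1:ℝ) := Nat.cast_nonneg d1
      rw [hc_def]; nlinarith
  have hsum : (∑ h ∈ Finset.range (d1 + 1),
        (((e:ℝ)+1) - 2 * h) * Fbgw h * Fbgw (e + 1 - h))
      ≤ c * (Fbgw 1 * Fbgw e) + ((e:ℝ)+1) * Fbgw (e+1) := by
    rw [Finset.sum_range_succ']
    have h0 : (((e:ℝ)+1) - 2 * ((0:ℕ):ℝ)) * Fbgw 0 * Fbgw (e + 1 - 0) = ((e:ℝ)+1) * Fbgw (e+1) := by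
      simp [Fbgw_zero]
    rw [h0]
    apply add_le_add_left
    calc ∑ i ∈ Finset.range d1, (((e:ℝ)+1) - 2 * ((i+1:ℕ):ℝ)) * Fbgw (i+1) * Fbgw (e + 1 - (i+1))
        ≤ ∑ i ∈ Finset.range d1, (((e:ℝ)+1) - 2) * (Fbgw 1 * Fbgw e) := by
          apply Finset.sum_le_sum
          intro i hi
          have hid : i < d1 := Finset.mem_range.mp hi
          have h2i : 2*(i+1) ≤ e+1 := by omega
          have hpair := pair_le (g := e+1) (i+1) (by omega) h2i
          have hee : e + 1 - 1 = e := by omega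
          rw [hee] at hpair
          have hcast1 : (((i+1:ℕ)):ℝ) = (i:ℝ)+1 := by push_cast; ring
      
          have h2ir : 2*((i:ℝ)+1) ≤ (e:ℝ)+1 := by exact_mod_cast h2i
          have hnn : (0:ℝ) ≤ ((e:ℝ)+1) - 2 * ((i+1:ℕ):ℝ) := by
            rw [hcast1]; linarith
          have hub : ((e:ℝ)+1) - 2 * ((i+1:ℕ):ℝ) ≤ ((e:ℝ)+1) - 2 := by
            rw [hcast1]
            have : (0:ℝ) ≤ (i:ℝ) := Nat.cast_nonneg i
            linarith
          have hFnn : (0:ℝ) ≤ Fbgw (i+1) * Fbgw (e+1-(i+1)) :=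
            le_of_lt (mul_pos (Fbgw_pos _) (Fbgw_pos _))
          have hub2 : (0:ℝ) ≤ ((e:ℝ)+1) - 2 := by
            have : (0:ℝ) ≤ 2*((i:ℝ)+1) - 2 := by
              have : (0:ℝ) ≤ (i:ℝ) := Nat.cast_nonneg i
              linarith
            linarith
          calc (((e:ℝ)+1) - 2 * ((i+1:ℕ):ℝ)) * Fbgw (i+1) * Fbgw (e + 1 - (i+1))
              = (((e:ℝ)+1) - 2 * ((i+1:ℕ):ℝ)) * (Fbgw (i+1) * Fbgw (e + 1 - (i+1))) := by ring
            _ ≤ (((e:ℝ)+1) - 2) * (Fbgw 1 * Fbgw e) :=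
                mul_le_mul hub hpair hFnn hub2
      _ = c * (Fbgw 1 * Fbgw e) := by
          rw [Finset.sum_const, Finset.card_range, nsmul_eq_mul, hc_def]; ring
  have hfac : (0:ℝ) ≤ (2:ℝ)^(2*(e+1)) / (((2*(e+1))! : ℕ):ℝ) := by positivity
  have ht2 := term2_bound e c hc
  have ht1 := term1_bound (e+1)
  rw [hcc] at ht1
  calc (2:ℝ)^(2*(e+1)) / (((2*(e+1))! : ℕ):ℝ)
        * ∑ h ∈ Finset.range (d1 + 1), (((e:ℝ)+1) - 2 * h) * Fbgw h * Fbgw (e + 1 - h)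
      ≤ (2:ℝ)^(2*(e+1)) / (((2*(e+1))! : ℕ):ℝ) * (c * (Fbgw 1 * Fbgw e) + ((e:ℝ)+1) * Fbgw (e+1)) :=
        mul_le_mul_of_nonneg_left hsum hfac
    _ = (2:ℝ)^(2*(e+1)) / (((2*(e+1))! : ℕ):ℝ) * (c * (Fbgw 1 * Fbgw e))
        + (2:ℝ)^(2*(e+1)) / (((2*(e+1))! : ℕ):ℝ) * (((e:ℝ)+1) * Fbgw (e+1)) := by ring
    _ ≤ c/((4*(e:ℝ)+1)*((e:ℝ)+1)*(2*(e:ℝ)+1)*Real.pi)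
        + 4*((e:ℝ)+1)/((4*((e:ℝ)+1)+1)*Real.pi) := add_le_add ht2 ht1
    _ ≤ 1/Real.pi := final_ineq d1 e (by omega)
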